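/- Let f̃ : ℝ^{n×n} → ℝ be differentiable and define f : ℝ^{n×r} × ℝ^{n×r} → ℝ by f(X,Y) = (f̃(X Yᵀ) + f̃(Y Xᵀ))/2, and for γ ∈ ℝ define F(X,Y) = f(X,Y) + (γ/2)‖X−Y‖_F². Suppose (X̄,Ȳ) is a stationary point of F (both partial Fréchet derivatives of F vanish at (X̄,Ȳ)) and X̄ = Ȳ. Then X̄ is a stationary point of the factorized problem (2), i.e., the Fréchet derivative of the map G : ℝ^{n×r} → ℝ, G(X) = f̃(X Xᵀ), vanishes at X̄. -/

import Mathlib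

open Matrix

attribute [local instance] Matrix.frobeniusNormedAddCommGroup Matrix.frobeniusNormedSpace

/-- Corollary 1 (i): If `(X̄,Ȳ)` is a stationary point of the
Courant-penalized surrogate `F(X,Y) = (f̃(XYᵀ)+f̃(YXᵀ))/2 + (γ/2)‖X−Y‖_F²`
with `X̄ = Ȳ`, then `X̄` is a stationary point of `X ↦ f̃(XXᵀ)`. -/
theorem stationary_point_of_factorized_problem
    (n r : ℕ) (γ : ℝ)
    (ftil : Matrix (Fin n) (Fin n) ℝ → ℝ)
    (hdiff : Differentiable ℝ ftil)
    (f F : Matrix (Fin n) (Fin r) ℝ → Matrix (Fin n) (Fin r) ℝ → ℝ)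
    (hf : ∀ X Y, f X Y = (ftil (X * Yᵀ) + ftil (Y * Xᵀ)) / 2)
    (hF : ∀ X Y, F X Y = f X Y + γ / 2 * ‖X - Y‖ ^ 2)
    (Xb Yb : Matrix (Fin n) (Fin r) ℝ)
    (hstatX : fderiv ℝ (fun X => F X Yb) Xb = 0)
    (hstatY : fderiv ℝ (fun Y => F Xb Y) Yb = 0)
    (hXY : Xb = Yb) :
    fderiv ℝ (fun X : Matrix (Fin n) (Fin r) ℝ => ftil (X * Xᵀ)) Xb = 0 := by
  subst hXY
  let L1 : Matrix (Fin n) (Fin r) ℝ →L[ℝ] Matrix (Fin n) (Fin n) ℝ :=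
    LinearMap.toContinuousLinearMap
      { toFun := fun X => X * Xbᵀ
        map_add' := fun X Y => Matrix.add_mul _ _ _
        map_smul' := fun c X => Matrix.smul_mul _ _ _ }
  let L2 : Matrix (Fin n) (Fin r) ℝ →L[ℝ] Matrix (Fin n) (Fin n) ℝ :=
    LinearMap.toContinuousLinearMap
      { toFun := fun X => Xb * Xᵀ
        map_add' := fun X Y => by simp [Matrix.transpose_add, Matrix.mul_add]
        map_smul' := fun c X => by simp [Matrix.transpose_smul, Matrix.mul_smul] }
  have hL1 : ∀ X, L1 X = X * Xbᵀ := fun X => rfl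
  have hL2 : ∀ X, L2 X = Xb * Xᵀ := fun X => rfl
  have hsq : (fun h : Matrix (Fin n) (Fin r) ℝ => h * hᵀ)
      =o[nhds (0 : Matrix (Fin n) (Fin r) ℝ)] (fun h => h) := by
    rw [Asymptotics.isLittleO_iff]
    intro ε hε
    filter_upwards [Metric.ball_mem_nhds (0 : Matrix (Fin n) (Fin r) ℝ) hε] with h hh
    rw [mem_ball_zero_iff] at hh
    calc ‖h * hᵀ‖ ≤ ‖h‖ * ‖hᵀ‖ := Matrix.frobenius_norm_mul _ _
      _ = ‖h‖ * ‖h‖ := by rw [Matrix.frobenius_norm_transpose]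
      _ ≤ ε * ‖h‖ := mul_le_mul_of_nonneg_right hh.le (norm_nonneg _)
  have hQ : HasFDerivAt (fun X : Matrix (Fin n) (Fin r) ℝ => X * Xᵀ) (L1 + L2) Xb := by
    refine hasFDerivAt_iff_isLittleO_nhds_zero.mpr ?_
    have key : (fun h : Matrix (Fin n) (Fin r) ℝ =>
        (Xb + h) * (Xb + h)ᵀ - Xb * Xbᵀ - (L1 + L2) h) = fun h => h * hᵀ := by
      funext h
      simp only [ContinuousLinearMap.add_apply, hL1, hL2]
      rw [Matrix.transpose_add, Matrix.mul_add, Matrix.add_mul, Matrix.add_mul]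
      abel
    erw [key]
    exact hsq
  set D := fderiv ℝ ftil (Xb * Xbᵀ) with hD
  have hg1 : HasFDerivAt (fun X => ftil (X * Xbᵀ)) (D.comp L1) Xb :=
    ((hdiff (Xb * Xbᵀ)).hasFDerivAt).comp Xb (L1.hasFDerivAt)
  have hg2 : HasFDerivAt (fun X => ftil (Xb * Xᵀ)) (D.comp L2) Xb :=
    ((hdiff (Xb * Xbᵀ)).hasFDerivAt).comp Xb (L2.hasFDerivAt)
  have hpen : HasFDerivAt (fun X : Matrix (Fin n) (Fin r) ℝ => γ / 2 * ‖X - Xb‖ ^ 2)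
      (0 : Matrix (Fin n) (Fin r) ℝ →L[ℝ] ℝ) Xb := by
    refine hasFDerivAt_iff_isLittleO_nhds_zero.mpr ?_
    have key : (fun h : Matrix (Fin n) (Fin r) ℝ =>
        γ / 2 * ‖Xb + h - Xb‖ ^ 2 - γ / 2 * ‖Xb - Xb‖ ^ 2
          - (0 : Matrix (Fin n) (Fin r) ℝ →L[ℝ] ℝ) h)
        = fun h => γ / 2 * ‖h‖ ^ 2 := by
      funext h
      simp
    erw [key, Asymptotics.isLittleO_iff]
    intro ε hε
    have hc : 0 < ε / (|γ / 2| + 1) := div_pos hε (by positivity)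
    filter_upwards [Metric.ball_mem_nhds (0 : Matrix (Fin n) (Fin r) ℝ) hc] with h hh
    rw [mem_ball_zero_iff] at hh
    calc ‖γ / 2 * ‖h‖ ^ 2‖ = |γ / 2| * ‖h‖ * ‖h‖ := by
          rw [Real.norm_eq_abs, abs_mul, sq, abs_of_nonneg (mul_nonneg (norm_nonneg h) (norm_nonneg h))]; ring
      _ ≤ (|γ / 2| + 1) * (ε / (|γ / 2| + 1)) * ‖h‖ := by
          apply mul_le_mul_of_nonneg_right _ (norm_nonneg h)
          exact mul_le_mul (by linarith [abs_nonneg (γ/2)]) hh.le (norm_nonneg h)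
            (by positivity)
      _ = ε * ‖h‖ := by rw [mul_div_cancel₀]; positivity
  -- derivative of the partial function X ↦ F X Xb
  have hFfun : (fun X => F X Xb)
      = fun X => 2⁻¹ * (ftil (X * Xbᵀ) + ftil (Xb * Xᵀ)) + γ / 2 * ‖X - Xb‖ ^ 2 := by
    funext X
    rw [hF, hf, div_eq_inv_mul]
  have hpart : HasFDerivAt (fun X => F X Xb)
      ((2⁻¹ : ℝ) • (D.comp L1 + D.comp L2) + 0) Xb := by
    rw [hFfun]
    exact ((hg1.add hg2).const_mul (2⁻¹ : ℝ)).add hpen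
  have hzero : (2⁻¹ : ℝ) • (D.comp L1 + D.comp L2) + 0 = 0 := by
    rw [← hpart.fderiv]; exact hstatX
  have hsum : D.comp L1 + D.comp L2 = 0 := by
    have := congrArg (fun T => (2 : ℝ) • T) hzero
    simpa [smul_smul] using this
  have hG : HasFDerivAt (fun X : Matrix (Fin n) (Fin r) ℝ => ftil (X * Xᵀ))
      (D.comp (L1 + L2)) Xb :=
    ((hdiff (Xb * Xbᵀ)).hasFDerivAt).comp Xb hQ
  rw [hG.fderiv, ContinuousLinearMap.comp_add, hsum]
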